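/- Pareto optimality implies Pareto stationarity: if θ* is Pareto optimal for differentiable objectives f_1,...,f_n (no θ dominates θ*), then there exist nonnegative weights γ summing to 1 with Σ_m γ_m ∇f_m(θ*) = 0. -/

import Mathlib

open Finset

open scoped RealInnerProductSpace in
/-- Auxiliary: a negative derivative at 0 forces smaller values for small positive t. -/
lemma aux_neg_deriv {h : ℝ → ℝ} {c : ℝ} (hd : HasDerivAt h c 0) (hc : c < 0) :
    ∀ᶠ t in nhdsWithin 0 (Set.Ioi 0), h t < h 0 := by
  have hs : Filter.Tendsto (slope h 0) (nhdsWithin 0 {0}ᶜ) (nhds c) :=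
    hasDerivAt_iff_tendsto_slope.mp hd
  have hsub : nhdsWithin (0:ℝ) (Set.Ioi 0) ≤ nhdsWithin 0 {0}ᶜ :=
    nhdsWithin_mono 0 (fun x hx => ne_of_gt hx)
  have hev : ∀ᶠ t in nhdsWithin (0:ℝ) (Set.Ioi 0), slope h 0 t < 0 :=
    (hs.mono_left hsub).eventually_lt_const hc
  filter_upwards [hev, self_mem_nhdsWithin] with t ht (htpos : t ∈ Set.Ioi 0)
  have : (h t - h 0) / t < 0 := by
    simpa [slope, sub_zero, div_eq_inv_mul] using ht
  have := (div_neg_iff).mp this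
  rcases this with ⟨h1, h2⟩ | ⟨h1, h2⟩
  · exact absurd h2 (not_lt.mpr (le_of_lt htpos))
  · linarith

open scoped RealInnerProductSpace

/-- Pareto optimality implies Pareto stationarity: if no `θ` dominates `θ*` for the
continuously differentiable objectives `f_1, …, f_n`, then there exist nonnegative
weights `γ` summing to `1` with `∑ m, γ_m ∇f_m(θ*) = 0`. -/
theorem stmt_10 (n p : ℕ) (hn : 0 < n) (f : Fin n → EuclideanSpace ℝ (Fin p) → ℝ)
    (hf : ∀ m, ContDiff ℝ 1 (f m)) (θstar : EuclideanSpace ℝ (Fin p))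
    (hpareto : ¬ ∃ θ : EuclideanSpace ℝ (Fin p),
      (∀ m, f m θ ≤ f m θstar) ∧ (fun m => f m θ) ≠ (fun m => f m θstar)) :
    ∃ γ : Fin n → ℝ, (∀ m, 0 ≤ γ m) ∧ (∑ m, γ m = 1) ∧
      ∑ m, γ m • gradient (f m) θstar = 0 := by
  by_contra hcon
  push_neg at hcon
  set g : Fin n → EuclideanSpace ℝ (Fin p) := fun m => gradient (f m) θstar with hg
  set T : (Fin n → ℝ) → EuclideanSpace ℝ (Fin p) := fun γ => ∑ m, γ m • g m with hT
  have hTlin : IsLinearMap ℝ T := by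
    constructor
    · intro x y
      simp only [hT, Pi.add_apply, add_smul, Finset.sum_add_distrib]
    · intro c x
      simp only [hT, Pi.smul_apply, smul_eq_mul, mul_smul, ← Finset.smul_sum]
  set K : Set (EuclideanSpace ℝ (Fin p)) := T '' stdSimplex ℝ (Fin n) with hK
  have hKconv : Convex ℝ K := (convex_stdSimplex ℝ (Fin n)).is_linear_image hTlin
  have hTcont : Continuous T := by
    apply continuous_finset_sum
    intro m _
    exact (continuous_apply m).smul continuous_const
  have hKcomp : IsCompact K := (isCompact_stdSimplex ℝ (Fin n)).image hTcont
  have h0K : (0 : EuclideanSpace ℝ (Fin p)) ∉ K := by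
    rintro ⟨γ, hγ, hγ0⟩
    exact hcon γ hγ.1 hγ.2 hγ0
  obtain ⟨φ, u, hφ, hu⟩ := geometric_hahn_banach_closed_point hKconv hKcomp.isClosed h0K
  have hu0 : u < 0 := by simpa using hu
  set d : EuclideanSpace ℝ (Fin p) := (InnerProductSpace.toDual ℝ _).symm φ with hd
  have hφd : ∀ x : EuclideanSpace ℝ (Fin p), ⟪d, x⟫ = φ x := fun x =>
    InnerProductSpace.toDual_symm_apply
  have hgm : ∀ m, g m ∈ K := by
    intro m
    refine ⟨fun j => if j = m then 1 else 0, ⟨fun j => by positivity, by simp⟩, ?_⟩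
    simp [hT, ite_smul]
  have hneg : ∀ m, ⟪g m, d⟫ < 0 := by
    intro m
    rw [real_inner_comm, hφd]
    exact lt_trans (hφ _ (hgm m)) hu0
  -- each objective strictly decreases along direction d
  have hline : ∀ m, HasDerivAt (fun t : ℝ => f m (θstar + t • d)) ⟪g m, d⟫ 0 := by
    intro m
    have hdiff : DifferentiableAt ℝ (f m) θstar :=
      (hf m).differentiable one_ne_zero θstar
    have hgrad : HasGradientAt (f m) (g m) θstar := hdiff.hasGradientAt
    have hfd : HasFDerivAt (f m) (InnerProductSpace.toDual ℝ _ (g m)) θstar :=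
      hgrad.hasFDerivAt
    have hL : HasDerivAt (fun t : ℝ => θstar + t • d) d 0 := by
      simpa using ((hasDerivAt_id (0:ℝ)).smul_const d).const_add θstar
    have hfd' : HasFDerivAt (f m) (InnerProductSpace.toDual ℝ _ (g m))
        ((fun t : ℝ => θstar + t • d) 0) := by simpa using hfd
    have := hfd'.comp_hasDerivAt 0 hL
    simp only [InnerProductSpace.toDual_apply_apply] at this; exact this
  have hev : ∀ᶠ t in nhdsWithin (0:ℝ) (Set.Ioi 0),
      ∀ m, f m (θstar + t • d) < f m θstar := by
    rw [Filter.eventually_all]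
    intro m
    have := aux_neg_deriv (hline m) (hneg m)
    simpa using this
  obtain ⟨t, ht⟩ := hev.exists
  apply hpareto
  refine ⟨θstar + t • d, fun m => le_of_lt (ht m), ?_⟩
  intro hEq
  have := congrFun hEq ⟨0, hn⟩
  exact absurd this (ne_of_lt (ht ⟨0, hn⟩))
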